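/- arXiv:math/9910104 — 2 statements merged into one kernel-verified Lean document; each statement's English description precedes it below -/
import Mathlib

section
/- The map sending z ∈ 𝓗 \ {i} to the G¹-orbit of the pair (i, z) is a homeomorphism from 𝓗 \ {i} onto the quotient space C_{2,0} = Conf_{2,0}/G¹ equipped with the quotient topology. In particular, every point of C_{2,0} has a unique representative of the form (i, z) with z ∈ 𝓗, z ≠ i. -/
/-- The configuration space `Conf_{2,0}` of two distinct points of the open upper
half-plane `𝓗`. -/
def Conf20 : Type :=
  {p : ℂ × ℂ // 0 < p.1.im ∧ 0 < p.2.im ∧ p.1 ≠ p.2}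

instance : TopologicalSpace Conf20 :=
  inferInstanceAs (TopologicalSpace {p : ℂ × ℂ // 0 < p.1.im ∧ 0 < p.2.im ∧ p.1 ≠ p.2})

/-- The orbit relation of the group `G¹ = {z ↦ az + b : a > 0, b ∈ ℝ}` acting
diagonally on `Conf_{2,0}`. -/
def G1Rel20 (x y : Conf20) : Prop :=
  ∃ a b : ℝ, 0 < a ∧
    y.val = ((a : ℂ) * x.val.1 + (b : ℂ), (a : ℂ) * x.val.2 + (b : ℂ))

/-- The quotient `C_{2,0} = Conf_{2,0}/G¹` with the quotient topology. -/
def C20 : Type := Quot G1Rel20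

instance : TopologicalSpace C20 :=
  inferInstanceAs (TopologicalSpace (Quot G1Rel20))

/-- For `z ∈ 𝓗 \ {i}`, the configuration `(i, z) ∈ Conf_{2,0}`. -/
def conf20OfPoint (z : {z : ℂ // 0 < z.im ∧ z ≠ Complex.I}) : Conf20 :=
  ⟨(Complex.I, (z : ℂ)), by simp [Complex.I_im], z.2.1, fun h => z.2.2 h.symm⟩

noncomputable section

def normC (x : Conf20) : ℂ := (x.val.2 - (x.val.1.re : ℂ)) / ((x.val.1.im : ℂ))

lemma normC_mem (x : Conf20) : 0 < (normC x).im ∧ normC x ≠ Complex.I := by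
  obtain ⟨⟨p, q⟩, hp, hq, hne⟩ := x
  constructor
  · show 0 < ((q - (p.re:ℂ)) / (p.im:ℂ)).im
    rw [Complex.div_ofReal_im]
    simp only [Complex.sub_im, Complex.ofReal_im, sub_zero]
    exact div_pos hq hp
  · intro h
    apply hne
    have him : (p.im : ℂ) ≠ 0 := Complex.ofReal_ne_zero.mpr hp.ne'
    have h' : (q - (p.re:ℂ)) / (p.im:ℂ) = Complex.I := h
    have : q - (p.re:ℂ) = (p.im:ℂ) * Complex.I := by
      field_simp at h'
      linear_combination h'
    have hq' : q = (p.re:ℂ) + (p.im:ℂ) * Complex.I := by linear_combination this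
    rw [Complex.re_add_im] at hq'
    exact hq'.symm

def normS (x : Conf20) : {z : ℂ // 0 < z.im ∧ z ≠ Complex.I} := ⟨normC x, normC_mem x⟩

lemma normS_invariant (x y : Conf20) (h : G1Rel20 x y) : normS x = normS y := by
  obtain ⟨a, b, ha, hy⟩ := h
  apply Subtype.ext
  show normC x = normC y
  unfold normC
  rw [hy]
  obtain ⟨⟨p, q⟩, hp, hq, hne⟩ := x
  simp only
  have hre : ((a:ℂ) * p + (b:ℂ)).re = a * p.re + b := by simp
  have him : ((a:ℂ) * p + (b:ℂ)).im = a * p.im := by simp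
  rw [hre, him]
  have ha' : (a:ℂ) ≠ 0 := Complex.ofReal_ne_zero.mpr ha.ne'
  have hpim : (p.im:ℂ) ≠ 0 := Complex.ofReal_ne_zero.mpr hp.ne'
  field_simp
  push_cast
  ring

lemma normS_conf (z : {z : ℂ // 0 < z.im ∧ z ≠ Complex.I}) : normS (conf20OfPoint z) = z := by
  apply Subtype.ext
  show (z.val - ((Complex.I.re : ℝ):ℂ)) / ((Complex.I.im:ℝ):ℂ) = z.val
  simp [Complex.I_re, Complex.I_im]

lemma rel_norm (x : Conf20) : G1Rel20 (conf20OfPoint (normS x)) x := by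
  refine ⟨x.val.1.im, x.val.1.re, x.2.1, ?_⟩
  obtain ⟨⟨p, q⟩, hp, hq, hne⟩ := x
  have hpim : (p.im:ℂ) ≠ 0 := Complex.ofReal_ne_zero.mpr hp.ne'
  show (p, q) = ((p.im:ℂ) * Complex.I + (p.re:ℂ), (p.im:ℂ) * ((q - (p.re:ℂ)) / (p.im:ℂ)) + (p.re:ℂ))
  refine Prod.ext ?_ ?_
  · show p = (p.im:ℂ) * Complex.I + (p.re:ℂ)
    linear_combination -(Complex.re_add_im p)
  · show q = (p.im:ℂ) * ((q - (p.re:ℂ)) / (p.im:ℂ)) + (p.re:ℂ)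
    field_simp
    ring

lemma continuous_normS : Continuous normS := by
  apply Continuous.subtype_mk
  show Continuous fun x : Conf20 => (x.val.2 - (x.val.1.re : ℂ)) / ((x.val.1.im : ℂ))
  have hv : Continuous fun x : Conf20 => x.val :=
    continuous_subtype_val (p := fun p : ℂ × ℂ => 0 < p.1.im ∧ 0 < p.2.im ∧ p.1 ≠ p.2)
  apply Continuous.div
  · exact (hv.snd.sub (Complex.continuous_ofReal.comp (Complex.continuous_re.comp hv.fst)))
  · exact Complex.continuous_ofReal.comp (Complex.continuous_im.comp hv.fst)
  · intro x
    exact Complex.ofReal_ne_zero.mpr x.2.1.ne'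

lemma continuous_conf : Continuous conf20OfPoint := by
  apply Continuous.subtype_mk
  exact continuous_const.prodMk continuous_subtype_val

def theHomeo : {z : ℂ // 0 < z.im ∧ z ≠ Complex.I} ≃ₜ C20 where
  toFun z := Quot.mk G1Rel20 (conf20OfPoint z)
  invFun := Quot.lift normS normS_invariant
  left_inv z := normS_conf z
  right_inv c := by
    induction c using Quot.ind with
    | _ x => exact Quot.sound (rel_norm x)
  continuous_toFun := (continuous_quot_mk).comp continuous_conf
  continuous_invFun := continuous_quot_lift _ continuous_normS

/-- The map `z ↦ [(i, z)]` is a homeomorphism from `𝓗 \ {i}` onto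
`C_{2,0} = Conf_{2,0}/G¹` with the quotient topology; in particular, every point of
`C_{2,0}` has a unique representative of the form `(i, z)` with `z ∈ 𝓗`, `z ≠ i`. -/
theorem C20_homeomorph_upperHalfPlane_sdiff_I :
    ∃ h : {z : ℂ // 0 < z.im ∧ z ≠ Complex.I} ≃ₜ C20,
      (∀ z, h z = Quot.mk G1Rel20 (conf20OfPoint z)) ∧
      ∀ c : C20, ∃! z : {z : ℂ // 0 < z.im ∧ z ≠ Complex.I},
        c = Quot.mk G1Rel20 (conf20OfPoint z) := by
  refine ⟨theHomeo, fun z => rfl, fun c => ⟨theHomeo.symm c, ?_, ?_⟩⟩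
  · have := theHomeo.apply_symm_apply c
    exact this.symm
  · intro z' hz'
    have : theHomeo z' = c := hz'.symm
    rw [← this, Homeomorph.symm_apply_apply]
end
end

section
/- The map sending a complex number z with |z| = 1 to the G²-orbit of the pair (0, z) is a homeomorphism from the unit circle {z ∈ ℂ : |z| = 1} onto the quotient space C_2 = Conf_2/G² equipped with the quotient topology. -/
/-- The configuration space `Conf_2` of two distinct points of `ℂ`. -/
def Conf2 : Type := {p : ℂ × ℂ // p.1 ≠ p.2}

instance : TopologicalSpace Conf2 :=
  inferInstanceAs (TopologicalSpace {p : ℂ × ℂ // p.1 ≠ p.2})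

/-- The orbit relation of the group `G² = {z ↦ az + b : a > 0, b ∈ ℂ}` acting
diagonally on `Conf_2`. -/
def G2Rel2 (x y : Conf2) : Prop :=
  ∃ (a : ℝ) (b : ℂ), 0 < a ∧ y.val = ((a : ℂ) * x.val.1 + b, (a : ℂ) * x.val.2 + b)

/-- The quotient `C_2 = Conf_2/G²` with the quotient topology. -/
def C2 : Type := Quot G2Rel2

instance : TopologicalSpace C2 := inferInstanceAs (TopologicalSpace (Quot G2Rel2))

/-- For `z` on the unit circle, the configuration `(0, z) ∈ Conf_2`. -/
def conf2OfCircle (z : {z : ℂ // ‖z‖ = 1}) : Conf2 :=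
  ⟨((0 : ℂ), (z : ℂ)), fun h => by
    have h0 : (z : ℂ) = 0 := h.symm
    simpa [h0] using z.2⟩

noncomputable def normMap (p : Conf2) : {z : ℂ // ‖z‖ = 1} :=
  ⟨(p.val.2 - p.val.1) / ((‖p.val.2 - p.val.1‖ : ℝ) : ℂ), by
    have hne : p.val.2 - p.val.1 ≠ 0 := sub_ne_zero.mpr (Ne.symm p.2)
    have h : ‖p.val.2 - p.val.1‖ ≠ 0 := norm_ne_zero_iff.mpr hne
    simp [norm_div, Complex.norm_real, abs_of_nonneg (norm_nonneg _),
      div_self h]⟩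

lemma normMap_rel : ∀ x y, G2Rel2 x y → normMap x = normMap y := by
  rintro x y ⟨a, b, ha, hy⟩
  have hsub : y.val.2 - y.val.1 = (a : ℂ) * (x.val.2 - x.val.1) := by
    rw [hy]; ring
  have hne : x.val.2 - x.val.1 ≠ 0 := sub_ne_zero.mpr (Ne.symm x.2)
  have ha' : (a : ℂ) ≠ 0 := by exact_mod_cast ha.ne'
  apply Subtype.ext
  simp only [normMap, hsub, norm_mul, Complex.norm_real, Real.norm_eq_abs, abs_of_pos ha]
  push_cast
  rw [mul_div_mul_left _ _ ha']

lemma normMap_circle (z : {z : ℂ // ‖z‖ = 1}) :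
    normMap (conf2OfCircle z) = z := by
  apply Subtype.ext
  simp [normMap, conf2OfCircle, z.2]

lemma mk_normMap (p : Conf2) :
    Quot.mk G2Rel2 (conf2OfCircle (normMap p)) = Quot.mk G2Rel2 p := by
  apply Quot.sound
  refine ⟨‖p.val.2 - p.val.1‖, p.val.1, ?_, ?_⟩
  · have hne : p.val.2 - p.val.1 ≠ 0 := sub_ne_zero.mpr (Ne.symm p.2)
    exact (norm_pos_iff.mpr hne)
  · have h : ((‖p.val.2 - p.val.1‖ : ℝ) : ℂ) ≠ 0 :=
      Complex.ofReal_ne_zero.mpr (norm_ne_zero_iff.mpr (sub_ne_zero.mpr (Ne.symm p.2)))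
    simp only [conf2OfCircle, normMap]
    refine Prod.ext (by simp) ?_
    simp only
    field_simp
    ring

/-- The map sending `z` with `|z| = 1` to the `G²`-orbit of `(0, z)` is a
homeomorphism from the unit circle onto `C_2 = Conf_2/G²` with the quotient
topology. -/
theorem C2_homeomorph_circle :
    ∃ h : {z : ℂ // ‖z‖ = 1} ≃ₜ C2,
      ∀ z, h z = Quot.mk G2Rel2 (conf2OfCircle z) := by
  refine ⟨{ toFun := fun z => Quot.mk G2Rel2 (conf2OfCircle z)
            invFun := Quot.lift normMap normMap_rel
            left_inv := fun z => normMap_circle z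
            right_inv := by
              apply Quot.ind
              intro p
              exact mk_normMap p
            continuous_toFun := by
              apply Continuous.comp (continuous_quot_mk)
              apply Continuous.subtype_mk
              exact (continuous_const.prodMk continuous_subtype_val)
            continuous_invFun := by
              apply continuous_quot_lift normMap_rel
              apply Continuous.subtype_mk
              have hc : Continuous fun p : Conf2 => p.val.2 - p.val.1 :=
                ((continuous_snd.comp continuous_subtype_val).sub
                  (continuous_fst.comp continuous_subtype_val))
              apply hc.div (by
                exact Complex.continuous_ofReal.comp (continuous_norm.comp hc))
              intro p
              exact Complex.ofReal_ne_zero.mpr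
                (norm_ne_zero_iff.mpr (sub_ne_zero.mpr (Ne.symm p.2))) },
         fun z => rfl⟩
end
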